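/- Unbiasedness of the one-point gradient estimator (Lemma 2). Let x ∈ ℝ^d, μ > 0 and c ∈ ℝ, and suppose that F is L_F-Lipschitz for some constant L_F ≥ 0. Then the Gaussian smoothed function F_μ is differentiable at x and the one-point gradient estimator g₁(x,μ,c,u,ξ) := ((f(x+μ·u, ξ) − c)/μ)·u is unbiased for its gradient, i.e. ∫_{ℝ^d} ( ∫_Ξ ((f(x+μ·u, ξ) − c)/μ)·u dD(x+μ·u)(ξ) ) dγ(u) = ∇F_μ(x). -/

import Mathlib

open MeasureTheory ProbabilityTheory
open scoped NNReal ENNReal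

/-- The standard Gaussian measure on `EuclideanSpace ℝ (Fin d)`, i.e. the `d`-fold
product of the standard Gaussian measure `N(0,1)` on `ℝ`. -/
noncomputable def stdGaussian (d : ℕ) : Measure (EuclideanSpace ℝ (Fin d)) :=
  (Measure.pi fun _ : Fin d => gaussianReal 0 1).map
    (MeasurableEquiv.toLp 2 (Fin d → ℝ))

namespace OPEU


noncomputable def gpdf (d : ℕ) (u : EuclideanSpace ℝ (Fin d)) : ℝ :=
  ((Real.sqrt (2 * Real.pi))⁻¹) ^ d * Real.exp (-‖u‖ ^ 2 / 2)

lemma gpdf_nonneg (d : ℕ) (u : EuclideanSpace ℝ (Fin d)) : 0 ≤ gpdf d u := by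
  unfold gpdf
  positivity

lemma gpdf_eq_prod (d : ℕ) (u : EuclideanSpace ℝ (Fin d)) :
    gpdf d u = ∏ i, gaussianPDFReal 0 1 (u i) := by
  unfold gpdf gaussianPDFReal
  simp only [NNReal.coe_one, mul_one, sub_zero]
  rw [Finset.prod_mul_distrib, Finset.prod_const, ← Real.exp_sum]
  congr 1
  · simp
  · rw [EuclideanSpace.norm_eq]
    rw [Real.sq_sqrt (by positivity)]
    rw [← Finset.sum_div, neg_div]
    congr 1
    simp only [Real.norm_eq_abs, sq_abs]
    rw [Finset.sum_neg_distrib, neg_div]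

lemma continuous_gpdf (d : ℕ) : Continuous (gpdf d) := by
  unfold gpdf
  fun_prop

lemma pi_gaussian_eq_withDensity (d : ℕ) :
    (Measure.pi fun _ : Fin d => gaussianReal 0 1) =
      (Measure.pi fun _ : Fin d => (volume : Measure ℝ)).withDensity
        (fun x => ENNReal.ofReal (∏ i, gaussianPDFReal 0 1 (x i))) := by
  apply Measure.pi_eq
  intro s hs
  rw [withDensity_apply _ (MeasurableSet.univ_pi hs)]
  rw [← lintegral_indicator (MeasurableSet.univ_pi hs)]
  have hind : ∀ x : Fin d → ℝ,
      (Set.univ.pi s).indicator (fun x => ENNReal.ofReal (∏ i, gaussianPDFReal 0 1 (x i))) x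
        = ENNReal.ofReal (∏ i, (s i).indicator (gaussianPDFReal 0 1) (x i)) := by
    intro x
    by_cases hx : x ∈ Set.univ.pi s
    · rw [Set.indicator_of_mem hx]
      congr 1
      apply Finset.prod_congr rfl
      intro i _
      rw [Set.indicator_of_mem (hx i (Set.mem_univ i))]
    · rw [Set.indicator_of_notMem hx]
      obtain ⟨i, hi⟩ : ∃ i, x i ∉ s i := by
        by_contra h
        push_neg at h
        exact hx (fun i _ => h i)
      rw [eq_comm, ENNReal.ofReal_eq_zero]
      apply le_of_eq
      exact (Finset.prod_eq_zero (Finset.mem_univ i) (by rw [Set.indicator_of_notMem hi]))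
  simp_rw [hind]
  rw [← MeasureTheory.volume_pi]
  have hint : Integrable (fun x : Fin d → ℝ => ∏ i, (s i).indicator (gaussianPDFReal 0 1) (x i)) := by
    apply Integrable.fintype_prod (f := fun (_ : Fin d) (t : ℝ) => (s _).indicator (gaussianPDFReal 0 1) t)
    intro i
    exact (integrable_gaussianPDFReal 0 1).indicator (hs i)
  rw [← ofReal_integral_eq_lintegral_ofReal hint]
  · rw [integral_fintype_prod_volume_eq_prod (f := fun (i : Fin d) (t : ℝ) => (s i).indicator (gaussianPDFReal 0 1) t)]
    rw [ENNReal.ofReal_prod_of_nonneg]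
    · apply Finset.prod_congr rfl
      intro i _
      rw [integral_indicator (hs i)]
      exact (gaussianReal_apply_eq_integral 0 one_ne_zero (s i)).symm
    · intro i _
      exact integral_nonneg (fun t => Set.indicator_nonneg (fun t _ => gaussianPDFReal_nonneg 0 1 t) t)
  · filter_upwards with x
    exact Finset.prod_nonneg fun i _ => Set.indicator_nonneg (fun t _ => gaussianPDFReal_nonneg 0 1 t) _

lemma stdGaussian_eq_withDensity (d : ℕ) :
    stdGaussian d = (volume : Measure (EuclideanSpace ℝ (Fin d))).withDensity
      (fun u => ENNReal.ofReal (gpdf d u)) := by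
  unfold _root_.stdGaussian
  rw [pi_gaussian_eq_withDensity]
  ext t ht
  rw [Measure.map_apply (MeasurableEquiv.toLp 2 (Fin d → ℝ)).measurable ht,
    withDensity_apply _ ((MeasurableEquiv.toLp 2 (Fin d → ℝ)).measurable ht),
    withDensity_apply _ ht]
  have hmp : MeasurePreserving (MeasurableEquiv.toLp 2 (Fin d → ℝ)).symm
      (volume : Measure (EuclideanSpace ℝ (Fin d)))
      (Measure.pi fun _ : Fin d => (volume : Measure ℝ)) := by
    have := EuclideanSpace.volume_preserving_symm_measurableEquiv_toLp (Fin d)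
    simpa [MeasureTheory.volume_pi] using this
  rw [← (hmp.symm _).setLIntegral_comp_preimage_emb
    (MeasurableEquiv.toLp 2 (Fin d → ℝ)).measurableEmbedding
    (fun u => ENNReal.ofReal (gpdf d u)) t]
  apply lintegral_congr
  intro a
  rw [gpdf_eq_prod]
  rfl



variable {d : ℕ}

lemma integrable_exp_neg_mul_sq_norm {b : ℝ} (hb : 0 < b) :
    Integrable (fun z : EuclideanSpace ℝ (Fin d) => Real.exp (-b * ‖z‖ ^ 2)) := by
  have h := (GaussianFourier.integrable_cexp_neg_mul_sq_norm_add
    (V := EuclideanSpace ℝ (Fin d)) (b := (b : ℂ)) (by simpa using hb) 0 0).norm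
  refine h.congr (Filter.Eventually.of_forall fun z => ?_)
  simp only [Complex.norm_exp]
  congr 1
  have : ((‖z‖ : ℂ) ^ 2).re = ‖z‖ ^ 2 := by
    rw [← Complex.ofReal_pow, Complex.ofReal_re]
  simp [Complex.add_re, Complex.mul_re, this]

lemma pow_mul_exp_bound {b : ℝ} (hb : 0 < b) (n : ℕ) {t : ℝ} (ht : 0 ≤ t) :
    t ^ n * Real.exp (-b * t ^ 2) ≤
      (n.factorial * Real.exp (1 / (2 * b))) * Real.exp (-(b / 2) * t ^ 2) := by
  have h1 : t ^ n ≤ n.factorial * Real.exp t := by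
    have h2 : t ^ n / n.factorial ≤ Real.exp t := by
      have hs := Real.sum_le_exp_of_nonneg ht (n + 1)
      refine le_trans ?_ hs
      have : t ^ n / n.factorial = t ^ n / (n.factorial : ℝ) := rfl
      exact Finset.single_le_sum (f := fun i => t ^ i / (i.factorial : ℝ))
        (fun i _ => by positivity) (Finset.mem_range.2 (Nat.lt_succ_self n))
    calc t ^ n = n.factorial * (t ^ n / n.factorial) := by
          field_simp
      _ ≤ n.factorial * Real.exp t := by
          exact mul_le_mul_of_nonneg_left h2 (by positivity)
  have h3 : t - (b / 2) * t ^ 2 ≤ 1 / (2 * b) := by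
    rw [le_div_iff₀ (by positivity)]
    nlinarith [sq_nonneg (b * t - 1)]
  calc t ^ n * Real.exp (-b * t ^ 2)
      ≤ (n.factorial * Real.exp t) * Real.exp (-b * t ^ 2) := by
        exact mul_le_mul_of_nonneg_right h1 (Real.exp_pos _).le
    _ = n.factorial * (Real.exp (t - (b / 2) * t ^ 2) * Real.exp (-(b / 2) * t ^ 2)) := by
        rw [mul_assoc, ← Real.exp_add, ← Real.exp_add]; ring_nf
    _ ≤ n.factorial * (Real.exp (1 / (2 * b)) * Real.exp (-(b / 2) * t ^ 2)) := by
        refine mul_le_mul_of_nonneg_left ?_ (by positivity)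
        exact mul_le_mul_of_nonneg_right (Real.exp_le_exp.2 h3) (Real.exp_pos _).le
    _ = (n.factorial * Real.exp (1 / (2 * b))) * Real.exp (-(b / 2) * t ^ 2) := by ring

lemma integrable_norm_pow_mul_exp {b : ℝ} (hb : 0 < b) (n : ℕ) :
    Integrable (fun z : EuclideanSpace ℝ (Fin d) => ‖z‖ ^ n * Real.exp (-b * ‖z‖ ^ 2)) := by
  refine Integrable.mono ((integrable_exp_neg_mul_sq_norm (half_pos hb)).const_mul
    (n.factorial * Real.exp (1 / (2 * b)))) ?_ ?_
  · apply Continuous.aestronglyMeasurable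
    fun_prop
  · refine Filter.Eventually.of_forall fun z => ?_
    rw [Real.norm_eq_abs, Real.norm_eq_abs, abs_of_nonneg (by positivity),
      abs_of_nonneg (by positivity)]
    have := pow_mul_exp_bound hb n (norm_nonneg z)
    linarith [this]

lemma integrable_poly_gauss (x₀ : EuclideanSpace ℝ (Fin d)) {b : ℝ} (hb : 0 < b) (a₀ a₁ a₂ : ℝ) :
    Integrable (fun z : EuclideanSpace ℝ (Fin d) =>
      (a₀ + a₁ * ‖z - x₀‖ + a₂ * ‖z - x₀‖ ^ 2) * Real.exp (-b * ‖z - x₀‖ ^ 2)) := by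
  have h0 : Integrable (fun z : EuclideanSpace ℝ (Fin d) =>
      (a₀ + a₁ * ‖z‖ + a₂ * ‖z‖ ^ 2) * Real.exp (-b * ‖z‖ ^ 2)) := by
    have e0 := (integrable_norm_pow_mul_exp (d := d) hb 0).const_mul a₀
    have e1 := (integrable_norm_pow_mul_exp (d := d) hb 1).const_mul a₁
    have e2 := (integrable_norm_pow_mul_exp (d := d) hb 2).const_mul a₂
    refine ((e0.add e1).add e2).congr (Filter.Eventually.of_forall fun z => ?_)
    simp only [Pi.add_apply, pow_zero, pow_one, one_mul, neg_mul]
    ring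
  have := h0.comp_sub_right x₀
  exact this

variable {d : ℕ}

lemma integral_stdGaussian {G : Type*} [NormedAddCommGroup G] [NormedSpace ℝ G]
    (g : EuclideanSpace ℝ (Fin d) → G) :
    ∫ u, g u ∂(stdGaussian d) = ∫ u, gpdf d u • g u := by
  rw [stdGaussian_eq_withDensity]
  have hmeas : Measurable fun u : EuclideanSpace ℝ (Fin d) => Real.toNNReal (gpdf d u) :=
    (continuous_gpdf d).measurable.real_toNNReal
  have : (fun u : EuclideanSpace ℝ (Fin d) => ENNReal.ofReal (gpdf d u))
      = fun u => ((Real.toNNReal (gpdf d u) : ℝ≥0) : ℝ≥0∞) := rfl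
  rw [this, integral_withDensity_eq_integral_smul hmeas]
  congr 1
  ext u
  rw [NNReal.smul_def, Real.coe_toNNReal _ (gpdf_nonneg d u)]

lemma integrable_stdGaussian_iff {G : Type*} [NormedAddCommGroup G] [NormedSpace ℝ G]
    (g : EuclideanSpace ℝ (Fin d) → G) :
    Integrable g (stdGaussian d) ↔ Integrable (fun u => gpdf d u • g u) volume := by
  rw [stdGaussian_eq_withDensity]
  have hmeas : Measurable fun u : EuclideanSpace ℝ (Fin d) => Real.toNNReal (gpdf d u) :=
    (continuous_gpdf d).measurable.real_toNNReal
  have h : (fun u : EuclideanSpace ℝ (Fin d) => ENNReal.ofReal (gpdf d u))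
      = fun u => ((Real.toNNReal (gpdf d u) : ℝ≥0) : ℝ≥0∞) := rfl
  rw [h, integrable_withDensity_iff_integrable_smul hmeas]
  constructor <;> intro hi <;> refine hi.congr (Filter.Eventually.of_forall fun u => ?_) <;>
    simp only [] <;> rw [NNReal.smul_def, Real.coe_toNNReal _ (gpdf_nonneg d u)]

lemma integral_gpdf_smul_id :
    ∫ u : EuclideanSpace ℝ (Fin d), gpdf d u • u = 0 := by
  have h := integral_neg_eq_self (fun u : EuclideanSpace ℝ (Fin d) => gpdf d u • u) volume
  have h2 : (∫ u : EuclideanSpace ℝ (Fin d), gpdf d (-u) • (-u))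
      = - ∫ u : EuclideanSpace ℝ (Fin d), gpdf d u • u := by
    rw [← integral_neg]
    congr 1
    ext u
    unfold gpdf
    rw [norm_neg, smul_neg]
  rw [h2] at h
  have h3 : (2 : ℝ) • (∫ u : EuclideanSpace ℝ (Fin d), gpdf d u • u) = 0 := by
    rw [two_smul]
    nth_rewrite 1 [← h]
    abel
  simpa using (smul_eq_zero.1 h3).resolve_left (by norm_num)

lemma hasFDerivAt_gaussKernel (b : ℝ) (z y : EuclideanSpace ℝ (Fin d)) :
    HasFDerivAt (fun y : EuclideanSpace ℝ (Fin d) => Real.exp (-b * ‖z - y‖ ^ 2))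
      ((Real.exp (-b * ‖z - y‖ ^ 2) * (2 * b)) • innerSL ℝ (z - y)) y := by
  have h1 : HasFDerivAt (fun y : EuclideanSpace ℝ (Fin d) => z - y)
      (-(ContinuousLinearMap.id ℝ (EuclideanSpace ℝ (Fin d)))) y :=
    (hasFDerivAt_id y).const_sub z
  have h2 := h1.inner ℝ h1
  have h2' : HasFDerivAt (fun y : EuclideanSpace ℝ (Fin d) => ‖z - y‖ ^ 2)
      ((-2 : ℝ) • innerSL ℝ (z - y)) y := by
    have hfun : (fun y : EuclideanSpace ℝ (Fin d) =>
        (inner ℝ (z - y) (z - y) : ℝ)) = fun y => ‖z - y‖ ^ 2 := by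
      ext y; exact real_inner_self_eq_norm_sq _
    rw [hfun] at h2
    refine h2.congr_fderiv (Eq.symm ?_)
    ext v
    simp only [ContinuousLinearMap.coe_comp', Function.comp_apply, ContinuousLinearMap.prod_apply,
      ContinuousLinearMap.neg_apply, ContinuousLinearMap.coe_id', id_eq,
      fderivInnerCLM_apply, ContinuousLinearMap.coe_smul', Pi.smul_apply, innerSL_apply_apply]
    rw [inner_neg_right, real_inner_comm]
    simp only [smul_eq_mul, inner_neg_left]
    ring
  have h3 := (h2'.const_mul (-b)).exp
  refine h3.congr_fderiv (Eq.symm ?_)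
  rw [smul_smul, smul_smul]
  congr 1
  ring


lemma integrable_stdGaussian_of_le (d : ℕ)
    (g : EuclideanSpace ℝ (Fin d) → EuclideanSpace ℝ (Fin d))
    (hg : AEStronglyMeasurable g volume) (a₀ a₁ a₂ : ℝ)
    (hbd : ∀ u, ‖g u‖ ≤ a₀ + a₁ * ‖u‖ + a₂ * ‖u‖ ^ 2) :
    Integrable g (stdGaussian d) := by
  rw [integrable_stdGaussian_iff]
  set C : ℝ := ((Real.sqrt (2 * Real.pi))⁻¹) ^ d with hCdef
  have hC : 0 < C := by
    have : 0 < Real.sqrt (2 * Real.pi) := Real.sqrt_pos.2 (by positivity)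
    positivity
  have hmain := integrable_poly_gauss (0 : EuclideanSpace ℝ (Fin d))
    (b := 1/2) (by norm_num) (C * a₀) (C * a₁) (C * a₂)
  refine hmain.mono (((continuous_gpdf d).aestronglyMeasurable).smul hg)
    (Filter.Eventually.of_forall fun u => ?_)
  rw [norm_smul, Real.norm_eq_abs, abs_of_nonneg (gpdf_nonneg d u)]
  have h1 : gpdf d u * ‖g u‖ ≤ gpdf d u * (a₀ + a₁ * ‖u‖ + a₂ * ‖u‖ ^ 2) :=
    mul_le_mul_of_nonneg_left (hbd u) (gpdf_nonneg d u)
  have h3 : gpdf d u * (a₀ + a₁ * ‖u‖ + a₂ * ‖u‖ ^ 2)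
      = (C * a₀ + C * a₁ * ‖u - 0‖ + C * a₂ * ‖u - 0‖ ^ 2) *
        Real.exp (-(1/2) * ‖u - 0‖ ^ 2) := by
    have h2 : gpdf d u = C * Real.exp (-(1/2) * ‖u‖ ^ 2) := by
      rw [gpdf, ← hCdef]
      congr 1
      ring
    rw [h2, sub_zero]
    ring
  rw [Real.norm_eq_abs]
  exact le_trans (le_trans h1 (le_of_eq h3)) (le_abs_self _)

set_option maxHeartbeats 2000000 in
lemma core (d : ℕ) (F : EuclideanSpace ℝ (Fin d) → ℝ) (L_F : ℝ) (hL_F : 0 ≤ L_F)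
    (hFLip : LipschitzWith L_F.toNNReal F) (μ : ℝ) (hμ : 0 < μ)
    (x : EuclideanSpace ℝ (Fin d)) :
    HasGradientAt (fun y => ∫ u, F (y + μ • u) ∂(stdGaussian d))
      (μ⁻¹ • ∫ u, F (x + μ • u) • u ∂(stdGaussian d)) x := by
  classical
  set C : ℝ := ((Real.sqrt (2 * Real.pi))⁻¹) ^ d with hCdef
  have hC : 0 < C := by
    rw [hCdef]
    have : 0 < Real.sqrt (2 * Real.pi) := Real.sqrt_pos.2 (by positivity)
    positivity
  have hgpdfC : ∀ u : EuclideanSpace ℝ (Fin d), gpdf d u = C * Real.exp (-‖u‖ ^ 2 / 2) :=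
    fun u => by rw [hCdef]; rfl
  set b : ℝ := (2 * μ ^ 2)⁻¹ with hbdef
  have hb : 0 < b := by rw [hbdef]; positivity
  have hbμ : b * μ ^ 2 = 1 / 2 := by rw [hbdef]; field_simp
  clear_value C b
  clear hCdef hbdef
  have hFcont : Continuous F := hFLip.continuous
  have hFz : ∀ z, |F z| ≤ |F x| + L_F * ‖z - x‖ := by
    intro z
    have h1 := hFLip.dist_le_mul z x
    rw [Real.dist_eq, dist_eq_norm, Real.coe_toNNReal _ hL_F] at h1
    have h2 : |F z| ≤ |F x| + |F z - F x| := by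
      have := abs_add_le (F x) (F z - F x)
      simpa using this
    linarith
  -- the kernel
  set ψ : EuclideanSpace ℝ (Fin d) → EuclideanSpace ℝ (Fin d) → ℝ :=
    fun y z => (C * F z) * Real.exp (-b * ‖z - y‖ ^ 2) with hψdef
  have hnorm_smul : ∀ (u : EuclideanSpace ℝ (Fin d)), ‖μ • u‖ = μ * ‖u‖ := by
    intro u
    rw [norm_smul, Real.norm_eq_abs, abs_of_pos hμ]
  have hexp_eq : ∀ (u : EuclideanSpace ℝ (Fin d)),
      -b * ‖μ • u‖ ^ 2 = -‖u‖ ^ 2 / 2 := by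
    intro u
    rw [hnorm_smul, mul_pow]
    linear_combination -(‖u‖ ^ 2) * hbμ
  have hgpdf_eq : ∀ (y u : EuclideanSpace ℝ (Fin d)),
      gpdf d u • F (y + μ • u) = ψ y (y + μ • u) := by
    intro y u
    simp only [hψdef, smul_eq_mul, add_sub_cancel_left]
    rw [hgpdfC, hexp_eq]
    ring
  have hD : (Module.finrank ℝ (EuclideanSpace ℝ (Fin d))) = d := finrank_euclideanSpace_fin
  -- representation
  have hrep : ∀ y, ∫ u, F (y + μ • u) ∂(stdGaussian d) = (μ ^ d)⁻¹ • ∫ z, ψ y z := by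
    intro y
    rw [integral_stdGaussian]
    have h1 : ∫ u, gpdf d u • F (y + μ • u) = ∫ u, (fun w => ψ y (y + w)) (μ • u) := by
      congr 1; ext u; rw [hgpdf_eq]
    rw [h1, Measure.integral_comp_smul_of_nonneg volume (fun w => ψ y (y + w)) μ (hR := hμ.le), hD,
      integral_add_left_eq_self (ψ y) y]
  -- the derivative kernel
  set Φ : EuclideanSpace ℝ (Fin d) → EuclideanSpace ℝ (Fin d) →
      (EuclideanSpace ℝ (Fin d) →L[ℝ] ℝ) :=
    fun y z => ((C * F z) * Real.exp (-b * ‖z - y‖ ^ 2) * (2 * b)) • innerSL ℝ (z - y) with hΦdef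
  have hdiff : ∀ (z y : EuclideanSpace ℝ (Fin d)),
      HasFDerivAt (fun y => ψ y z) (Φ y z) y := by
    intro z y
    have h := (hasFDerivAt_gaussKernel b z y).const_mul (C * F z)
    refine h.congr_fderiv (Eq.symm ?_)
    rw [hΦdef, smul_smul]
    congr 1
    ring
  have hΦnorm : ∀ y z, ‖Φ y z‖
      = C * (2 * b) * Real.exp (-b * ‖z - y‖ ^ 2) * |F z| * ‖z - y‖ := by
    intro y z
    simp only [hΦdef]
    rw [norm_smul ((C * F z) * Real.exp (-b * ‖z - y‖ ^ 2) * (2 * b)) ((innerSL ℝ) (z - y)),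
      innerSL_apply_norm, Real.norm_eq_abs, abs_mul, abs_mul, abs_mul C (F z),
      abs_of_pos hC, abs_of_pos (Real.exp_pos _), abs_of_pos (by positivity : (0:ℝ) < 2 * b)]
    ring
  have hexp : ∀ r s : ℝ, 0 ≤ r → 0 ≤ s → r - μ ≤ s →
      Real.exp (-b * s ^ 2) ≤ Real.exp 1 * Real.exp (-(b / 2) * r ^ 2) := by
    intro r s hr hs hrs
    rw [← Real.exp_add]
    apply Real.exp_le_exp.2
    rcases le_or_gt r μ with h | h
    · have h1 : b * r ^ 2 ≤ b * μ ^ 2 :=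
        mul_le_mul_of_nonneg_left (pow_le_pow_left₀ hr h 2) hb.le
      nlinarith [mul_nonneg hb.le (sq_nonneg s)]
    · have hs2 : (r - μ) ^ 2 ≤ s ^ 2 := by nlinarith
      have h1 : b * (r - μ) ^ 2 ≤ b * s ^ 2 := mul_le_mul_of_nonneg_left hs2 hb.le
      nlinarith [sq_nonneg (b * r - 2 * b * μ), mul_pos hb hμ, mul_pos hb hb]
  -- the bound
  set bound : EuclideanSpace ℝ (Fin d) → ℝ := fun z =>
    ((C * (2 * b) * Real.exp 1) * (|F x| * μ)
      + ((C * (2 * b) * Real.exp 1) * (|F x| + L_F * μ)) * ‖z - x‖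
      + ((C * (2 * b) * Real.exp 1) * L_F) * ‖z - x‖ ^ 2) *
      Real.exp (-(b / 2) * ‖z - x‖ ^ 2) with hbounddef
  have hbound_int : Integrable bound := integrable_poly_gauss x (half_pos hb) _ _ _
  have hbound : ∀ z : EuclideanSpace ℝ (Fin d), ∀ y ∈ Metric.ball x μ,
      ‖Φ y z‖ ≤ bound z := by
    intro z y hy
    have hyx : ‖y - x‖ < μ := by rwa [Metric.mem_ball, dist_eq_norm] at hy
    have hr : (0:ℝ) ≤ ‖z - x‖ := norm_nonneg _
    have hs : (0:ℝ) ≤ ‖z - y‖ := norm_nonneg _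
    have hrs : ‖z - x‖ - μ ≤ ‖z - y‖ := by
      have h1 : ‖z - x‖ - ‖z - y‖ ≤ ‖(z - x) - (z - y)‖ := norm_sub_norm_le _ _
      have h2 : (z - x) - (z - y) = y - x := by abel
      rw [h2] at h1
      linarith
    have hsu : ‖z - y‖ ≤ ‖z - x‖ + μ := by
      have h1 : z - y = (z - x) + (x - y) := by abel
      calc ‖z - y‖ = ‖(z - x) + (x - y)‖ := by rw [h1]
        _ ≤ ‖z - x‖ + ‖x - y‖ := norm_add_le _ _
        _ ≤ ‖z - x‖ + μ := by
            have hxy : ‖x - y‖ = ‖y - x‖ := norm_sub_rev _ _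
            linarith
    rw [hΦnorm]
    have hA : (0:ℝ) ≤ |F x| + L_F * ‖z - x‖ :=
      add_nonneg (abs_nonneg _) (mul_nonneg hL_F hr)
    have h1 : |F z| * ‖z - y‖ ≤ (|F x| + L_F * ‖z - x‖) * (‖z - x‖ + μ) :=
      mul_le_mul (hFz z) hsu hs hA
    have hE := hexp (‖z - x‖) (‖z - y‖) hr hs hrs
    have h2 : Real.exp (-b * ‖z - y‖ ^ 2) * (|F z| * ‖z - y‖)
        ≤ (Real.exp 1 * Real.exp (-(b / 2) * ‖z - x‖ ^ 2)) *
          ((|F x| + L_F * ‖z - x‖) * (‖z - x‖ + μ)) :=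
      mul_le_mul hE h1 (mul_nonneg (abs_nonneg _) hs) (by positivity)
    calc C * (2 * b) * Real.exp (-b * ‖z - y‖ ^ 2) * |F z| * ‖z - y‖
        = (C * (2 * b)) * (Real.exp (-b * ‖z - y‖ ^ 2) * (|F z| * ‖z - y‖)) := by ring
      _ ≤ (C * (2 * b)) * ((Real.exp 1 * Real.exp (-(b / 2) * ‖z - x‖ ^ 2)) *
            ((|F x| + L_F * ‖z - x‖) * (‖z - x‖ + μ))) :=
          mul_le_mul_of_nonneg_left h2 (by positivity)
      _ = bound z := by rw [hbounddef]; ring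
  -- continuity facts
  have hexp_cont : ∀ y : EuclideanSpace ℝ (Fin d),
      Continuous (fun z : EuclideanSpace ℝ (Fin d) => Real.exp (-b * ‖z - y‖ ^ 2)) := by
    intro y
    have h1 : Continuous fun z : EuclideanSpace ℝ (Fin d) => -b * ‖z - y‖ ^ 2 :=
      continuous_const.mul (((continuous_id.sub continuous_const).norm).pow 2)
    exact Real.continuous_exp.comp h1
  have hψcont : ∀ y, Continuous (fun z => ψ y z) := by
    intro y
    exact (continuous_const.mul hFcont).mul (hexp_cont y)
  have hΦcont : Continuous (fun z => Φ x z) := by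
    simp only [hΦdef]
    apply Continuous.smul (f := fun z => C * F z * Real.exp (-b * ‖z - x‖ ^ 2) * (2 * b))
      (g := fun z => (innerSL ℝ) (z - x))
    · exact ((continuous_const.mul hFcont).mul (hexp_cont x)).mul continuous_const
    · exact (innerSL ℝ).continuous.comp (continuous_id.sub continuous_const)
  have hψx_int : Integrable (fun z => ψ x z) := by
    refine (integrable_poly_gauss x hb (C * |F x|) (C * L_F) 0).mono
      ((hψcont x).aestronglyMeasurable) (Filter.Eventually.of_forall fun z => ?_)
    have h1 : |ψ x z| ≤ (C * |F x| + C * L_F * ‖z - x‖ + 0 * ‖z - x‖ ^ 2) *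
        Real.exp (-b * ‖z - x‖ ^ 2) := by
      simp only [hψdef]
      simp only [abs_mul, abs_of_pos (Real.exp_pos (-b * ‖z - x‖ ^ 2)), abs_of_pos hC]
      have h5 : C * |F z| ≤ C * (|F x| + L_F * ‖z - x‖) :=
        mul_le_mul_of_nonneg_left (hFz z) hC.le
      have h6 : C * |F z| * Real.exp (-b * ‖z - x‖ ^ 2)
          ≤ (C * (|F x| + L_F * ‖z - x‖)) * Real.exp (-b * ‖z - x‖ ^ 2) :=
        mul_le_mul_of_nonneg_right h5 (Real.exp_pos _).le
      calc C * |F z| * Real.exp (-b * ‖z - x‖ ^ 2)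
          ≤ (C * (|F x| + L_F * ‖z - x‖)) * Real.exp (-b * ‖z - x‖ ^ 2) := h6
        _ = (C * |F x| + C * L_F * ‖z - x‖ + 0 * ‖z - x‖ ^ 2) *
              Real.exp (-b * ‖z - x‖ ^ 2) := by ring
    rw [Real.norm_eq_abs, Real.norm_eq_abs]
    exact le_trans h1 (le_abs_self _)
  -- apply dominated differentiation
  have happly := hasFDerivAt_integral_of_dominated_of_fderiv_le (𝕜 := ℝ) (μ := volume)
    (F := fun y z => ψ y z) (F' := fun y z => Φ y z) (x₀ := x) (bound := bound) (Metric.ball_mem_nhds x hμ)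
    (Filter.Eventually.of_forall fun y => (hψcont y).aestronglyMeasurable)
    hψx_int hΦcont.aestronglyMeasurable
    (Filter.Eventually.of_forall fun z y hy => hbound z y hy)
    hbound_int
    (Filter.Eventually.of_forall fun z y _ => hdiff z y)
  -- vector form of the derivative
  set q : EuclideanSpace ℝ (Fin d) → EuclideanSpace ℝ (Fin d) :=
    fun z => ((C * F z) * Real.exp (-b * ‖z - x‖ ^ 2) * (2 * b)) • (z - x) with hqdef
  have hq_cont : Continuous q := by
    simp only [hqdef]
    exact (((continuous_const.mul hFcont).mul (hexp_cont x)).mul continuous_const).smul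
      (continuous_id.sub continuous_const)
  have hq_int : Integrable q := by
    refine (integrable_poly_gauss x hb 0 (C * (2 * b) * |F x|) (C * (2 * b) * L_F)).mono
      hq_cont.aestronglyMeasurable (Filter.Eventually.of_forall fun z => ?_)
    simp only [hqdef]
    have h1 : ‖((C * F z) * Real.exp (-b * ‖z - x‖ ^ 2) * (2 * b)) • (z - x)‖
        = C * (2 * b) * Real.exp (-b * ‖z - x‖ ^ 2) * |F z| * ‖z - x‖ := by
      rw [norm_smul, Real.norm_eq_abs, abs_mul, abs_mul, abs_mul,
        abs_of_pos hC, abs_of_pos (Real.exp_pos _), abs_of_pos (by positivity : (0:ℝ) < 2 * b)]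
      ring
    rw [h1, Real.norm_eq_abs]
    have h4 : |F z| * ‖z - x‖ ≤ (|F x| + L_F * ‖z - x‖) * ‖z - x‖ :=
      mul_le_mul_of_nonneg_right (hFz z) (norm_nonneg _)
    have h2 : C * (2 * b) * Real.exp (-b * ‖z - x‖ ^ 2) * |F z| * ‖z - x‖
        ≤ (0 + C * (2 * b) * |F x| * ‖z - x‖ + C * (2 * b) * L_F * ‖z - x‖ ^ 2) *
          Real.exp (-b * ‖z - x‖ ^ 2) := by
      calc C * (2 * b) * Real.exp (-b * ‖z - x‖ ^ 2) * |F z| * ‖z - x‖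
          = (C * (2 * b) * Real.exp (-b * ‖z - x‖ ^ 2)) * (|F z| * ‖z - x‖) := by ring
        _ ≤ (C * (2 * b) * Real.exp (-b * ‖z - x‖ ^ 2)) *
              ((|F x| + L_F * ‖z - x‖) * ‖z - x‖) :=
            mul_le_mul_of_nonneg_left h4 (by positivity)
        _ = (0 + C * (2 * b) * |F x| * ‖z - x‖ + C * (2 * b) * L_F * ‖z - x‖ ^ 2) *
              Real.exp (-b * ‖z - x‖ ^ 2) := by ring
    exact le_trans h2 (le_abs_self _)
  have hT : (∫ z, Φ x z) = innerSL ℝ (∫ z, q z) := by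
    have hfq : ∀ z, Φ x z = innerSL ℝ (q z) := by
      intro z
      simp only [hΦdef, hqdef]
      rw [_root_.map_smul]
    simp_rw [hfq]
    exact ContinuousLinearMap.integral_comp_comm (innerSL ℝ) hq_int
  -- gradient
  have hfun : (fun y => ∫ u, F (y + μ • u) ∂(stdGaussian d)) =
      (fun y => (μ ^ d)⁻¹ • ∫ z, ψ y z) := funext hrep
  have hFd : HasFDerivAt (fun y => ∫ u, F (y + μ • u) ∂(stdGaussian d))
      ((μ ^ d)⁻¹ • innerSL ℝ (∫ z, q z)) x := by
    rw [hfun, ← hT]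
    exact happly.const_smul ((μ ^ d)⁻¹)
  have htd : ∀ v : EuclideanSpace ℝ (Fin d),
      (InnerProductSpace.toDual ℝ (EuclideanSpace ℝ (Fin d))) v = innerSL ℝ v := by
    intro v
    ext w
    simp [InnerProductSpace.toDual_apply_apply]
  have hgr : HasGradientAt (fun y => ∫ u, F (y + μ • u) ∂(stdGaussian d))
      ((μ ^ d)⁻¹ • ∫ z, q z) x := by
    rw [hasGradientAt_iff_hasFDerivAt]
    rw [_root_.map_smul, htd]
    exact hFd
  -- identify the gradient vector
  have h2bμ : 2 * b * μ = μ⁻¹ := by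
    field_simp
    linear_combination 2 * hbμ
  have hqval : ∀ u, q (x + μ • u) = gpdf d u • (μ⁻¹ • (F (x + μ • u) • u)) := by
    intro u
    simp only [hqdef, add_sub_cancel_left]
    rw [hgpdfC, hexp_eq, smul_smul, smul_smul, smul_smul]
    congr 1
    rw [← h2bμ]
    ring
  have hsub1 : ∫ u, q (x + μ • u) = (μ ^ d)⁻¹ • ∫ z, q z := by
    have h1 := Measure.integral_comp_smul_of_nonneg
      (volume : Measure (EuclideanSpace ℝ (Fin d))) (fun w => q (x + w)) μ (hR := hμ.le)
    rw [hD, integral_add_left_eq_self q x] at h1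
    exact h1
  have hμd : (μ : ℝ) ^ d ≠ 0 := by positivity
  have hgrad_val : (μ ^ d)⁻¹ • (∫ z, q z)
      = μ⁻¹ • ∫ u, F (x + μ • u) • u ∂(stdGaussian d) := by
    rw [← hsub1]
    rw [integral_stdGaussian (fun u => F (x + μ • u) • u)]
    have h1 : ∀ u : EuclideanSpace ℝ (Fin d),
        q (x + μ • u) = μ⁻¹ • (gpdf d u • (F (x + μ • u) • u)) := by
      intro u
      rw [hqval, smul_comm]
    simp_rw [h1]
    rw [integral_smul]
  rw [← hgrad_val]
  exact hgr


end OPEU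

/-- Unbiasedness of the one-point gradient estimator (Lemma 2). -/
theorem one_point_estimator_unbiased
    (d : ℕ) (hd : 0 < d) {Ξ : Type*} [MeasurableSpace Ξ]
    (D : Kernel (EuclideanSpace ℝ (Fin d)) Ξ) [IsMarkovKernel D]
    (f : EuclideanSpace ℝ (Fin d) → Ξ → ℝ)
    (hf_meas : Measurable (Function.uncurry f))
    (hf_int : ∀ y, Integrable (f y) (D y))
    (F : EuclideanSpace ℝ (Fin d) → ℝ)
    (hF : ∀ y, F y = ∫ ξ, f y ξ ∂(D y))
    (L_F : ℝ) (hL_F : 0 ≤ L_F) (hFLip : LipschitzWith L_F.toNNReal F)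
    (μ : ℝ) (hμ : 0 < μ) (c : ℝ) (x : EuclideanSpace ℝ (Fin d))
    (Fμ : EuclideanSpace ℝ (Fin d) → ℝ)
    (hFμ : ∀ y, Fμ y = ∫ u, F (y + μ • u) ∂(stdGaussian d)) :
    DifferentiableAt ℝ Fμ x ∧
      (∫ u, (∫ ξ, ((f (x + μ • u) ξ - c) / μ) • u ∂(D (x + μ • u))) ∂(stdGaussian d))
        = gradient Fμ x := by
  have hFμeq : Fμ = fun y => ∫ u, F (y + μ • u) ∂(stdGaussian d) := funext hFμ
  have hgr := OPEU.core d F L_F hL_F hFLip μ hμ x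
  rw [← hFμeq] at hgr
  refine ⟨hgr.differentiableAt, ?_⟩
  rw [hgr.gradient]
  -- compute the inner integral
  have hinner : ∀ u : EuclideanSpace ℝ (Fin d),
      (∫ ξ, ((f (x + μ • u) ξ - c) / μ) • u ∂(D (x + μ • u)))
        = ((F (x + μ • u) - c) / μ) • u := by
    intro u
    rw [integral_smul_const]
    congr 1
    rw [integral_div]
    congr 1
    rw [integral_sub (hf_int _) (integrable_const c), integral_const]
    rw [hF (x + μ • u)]
    simp
  simp_rw [hinner]
  -- Lipschitz growth bound
  have hFz : ∀ u : EuclideanSpace ℝ (Fin d),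
      |F (x + μ • u)| ≤ |F x| + (L_F * μ) * ‖u‖ := by
    intro u
    have h1 := hFLip.dist_le_mul (x + μ • u) x
    rw [Real.dist_eq, Real.coe_toNNReal _ hL_F] at h1
    have h2 : dist (x + μ • u) x = μ * ‖u‖ := by
      rw [dist_eq_norm, add_sub_cancel_left, norm_smul, Real.norm_eq_abs, abs_of_pos hμ]
    rw [h2] at h1
    have h3 : |F (x + μ • u)| ≤ |F x| + |F (x + μ • u) - F x| := by
      have := abs_add_le (F x) (F (x + μ • u) - F x)
      simpa using this
    calc |F (x + μ • u)| ≤ |F x| + |F (x + μ • u) - F x| := h3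
      _ ≤ |F x| + L_F * (μ * ‖u‖) := by linarith
      _ = |F x| + (L_F * μ) * ‖u‖ := by ring
  have hcont1 : Continuous fun u : EuclideanSpace ℝ (Fin d) => x + μ • u :=
    continuous_const.add (continuous_id.const_smul μ)
  -- integrability of both pieces
  have hIntF : Integrable (fun u => μ⁻¹ • (F (x + μ • u) • u)) (stdGaussian d) := by
    refine OPEU.integrable_stdGaussian_of_le d _
      ((((hFLip.continuous.comp hcont1).smul continuous_id).const_smul μ⁻¹).aestronglyMeasurable)
      0 (|μ⁻¹| * |F x|) (|μ⁻¹| * (L_F * μ)) (fun u => ?_)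
    rw [norm_smul, norm_smul, Real.norm_eq_abs, Real.norm_eq_abs]
    have h1 : |F (x + μ • u)| * ‖u‖ ≤ (|F x| + (L_F * μ) * ‖u‖) * ‖u‖ :=
      mul_le_mul_of_nonneg_right (hFz u) (norm_nonneg u)
    calc |μ⁻¹| * (|F (x + μ • u)| * ‖u‖)
        ≤ |μ⁻¹| * ((|F x| + (L_F * μ) * ‖u‖) * ‖u‖) :=
          mul_le_mul_of_nonneg_left h1 (abs_nonneg _)
      _ = 0 + (|μ⁻¹| * |F x|) * ‖u‖ + (|μ⁻¹| * (L_F * μ)) * ‖u‖ ^ 2 := by ring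
  have hIntc : Integrable (fun u : EuclideanSpace ℝ (Fin d) => (c / μ) • u) (stdGaussian d) := by
    refine OPEU.integrable_stdGaussian_of_le d _
      ((continuous_id.const_smul (c / μ)).aestronglyMeasurable)
      0 |c / μ| 0 (fun u => ?_)
    rw [norm_smul, Real.norm_eq_abs]
    apply le_of_eq
    ring
  -- split the integral
  have hsplit : (fun u : EuclideanSpace ℝ (Fin d) => ((F (x + μ • u) - c) / μ) • u)
      = fun u => μ⁻¹ • (F (x + μ • u) • u) - (c / μ) • u := by
    funext u
    simp only [sub_div, sub_smul, smul_smul, div_eq_inv_mul]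
    rw [mul_sub, sub_smul]
  rw [hsplit, integral_sub hIntF hIntc, integral_smul, integral_smul]
  have hid : (∫ u, u ∂(stdGaussian d)) = 0 := by
    rw [OPEU.integral_stdGaussian (fun u => u)]
    exact OPEU.integral_gpdf_smul_id
  rw [hid, smul_zero, sub_zero]
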